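/- Let A be a type and J a nonempty finite subset of A. Let C be the category whose objects are pairs (K, I) of finite subsets of A with K ⊆ I, J ⊆ I and K ∩ J nonempty, and with exactly one morphism (K₁, I₁) ⟶ (K₂, I₂) when K₁ ⊆ K₂ and I₁ ⊆ I₂ (and none otherwise). Then the functor from the poset of nonempty subsets of J (ordered by inclusion) to C sending K to (K, J) — i.e. the inclusion of the full subcategory of objects with I = J — is an initial functor. -/
import Mathlib


open CategoryTheory

variable {A : Type} [DecidableEq A]

/-- The poset `C` of pairs `(K, I)` of finite subsets of `A` with `K ⊆ I`, `J ⊆ I` and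
`K ∩ J` nonempty; there is exactly one morphism `(K₁, I₁) ⟶ (K₂, I₂)` when `K₁ ⊆ K₂` and
`I₁ ⊆ I₂`. -/
abbrev AugPairs (J : Finset A) :=
  { p : Finset A × Finset A // p.1 ⊆ p.2 ∧ J ⊆ p.2 ∧ (p.1 ∩ J).Nonempty }

/-- The inclusion of the poset of nonempty subsets of `J` into `C`, sending `K` to
`(K, J)`. -/
def inclFunctor (J : Finset A) :
    { K : Finset A // K.Nonempty ∧ K ⊆ J } ⥤ AugPairs J :=
  Monotone.functor
    (f := fun K => ⟨(K.1, J), K.2.2, Finset.Subset.refl J, by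
      rw [Finset.inter_eq_left.mpr K.2.2]; exact K.2.1⟩) <| by
    intro K K' h
    exact ⟨h, le_refl J⟩

/-- The full subcategory of objects of the form `(K, J)` is initial in `C`. -/
theorem stmt6 (J : Finset A) (hJ : J.Nonempty) : (inclFunctor J).Initial := by
  constructor
  intro d
  obtain ⟨⟨K, I⟩, hKI, hJI, hKJ⟩ := d
  -- the "terminal" object : `K ∩ J`
  let t : CostructuredArrow (inclFunctor J) ⟨(K, I), hKI, hJI, hKJ⟩ :=
    CostructuredArrow.mk (Y := ⟨K ∩ J, hKJ, Finset.inter_subset_right⟩)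
      (homOfLE ⟨Finset.inter_subset_left, hJI⟩)
  have key : ∀ c : CostructuredArrow (inclFunctor J) ⟨(K, I), hKI, hJI, hKJ⟩,
      Nonempty (c ⟶ t) := by
    intro c
    have h1 : c.left.1 ⊆ K := (leOfHom c.hom).1
    have h2 : c.left.1 ⊆ J := c.left.2.2
    refine ⟨CostructuredArrow.homMk (homOfLE ?_) (Subsingleton.elim _ _)⟩
    exact Finset.subset_inter h1 h2
  have : Nonempty (CostructuredArrow (inclFunctor J) ⟨(K, I), hKI, hJI, hKJ⟩) := ⟨t⟩
  apply isConnected_of_zigzag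
  intro j₁ j₂
  refine ⟨[t, j₂], ?_, rfl⟩
  refine List.Chain.cons (Or.inl (key j₁)) ?_
  exact List.Chain.cons (Or.inr (key j₂)) List.Chain.nil
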